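/- Let f ∈ E with θ_f ≥ 0 and let U ⊆ V induce a connected subgraph of G with f ∈ δ(U). If θ_f ≥ Σ_{e ∈ δ(U) \ {f}} |θ_e|, then there exists an optimal solution x* of the multicut problem min_{x ∈ MC(G)} ⟨θ, x⟩ with x*_f = 0. -/

import Mathlib

variable {V : Type} [Fintype V] [DecidableEq V]

/-- The set of edges of `G` with one endpoint in `U` and the other in `W` (δ(U, W)). -/
def btw (G : SimpleGraph V) [DecidableRel G.Adj] (U W : Finset V) : Finset (Sym2 V) :=
  G.edgeFinset.filter fun e => ∃ x ∈ U, ∃ y ∈ W, e = s(x, y)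

/-- The cut δ(U) := δ(U, V \ U). -/
def cutδ (G : SimpleGraph V) [DecidableRel G.Adj] (U : Finset V) : Finset (Sym2 V) :=
  btw G U Uᶜ

/-- `M` is (the edge set of) a multicut of `G`. -/
def IsMulticut (G : SimpleGraph V) [DecidableRel G.Adj] (M : Finset (Sym2 V)) : Prop :=
  M ⊆ G.edgeFinset ∧ ∃ f : V → V, ∀ x y, G.Adj x y → (s(x, y) ∈ M ↔ f x ≠ f y)

/-- auxiliary: the merged equivalence relation. -/
def sameRel (U : Finset V) (g : V → V) (u₀ v₀ : V) (x y : V) : Prop :=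
  if x ∈ U then
    (if y ∈ U then g x = g y else g x = g u₀ ∧ g y = g v₀)
  else
    (if y ∈ U then g y = g u₀ ∧ g x = g v₀ else g x = g y)

lemma sameRel_refl (U : Finset V) (g : V → V) (u₀ v₀ : V) (x : V) :
    sameRel U g u₀ v₀ x x := by
  unfold sameRel; split <;> simp

lemma sameRel_symm {U : Finset V} {g : V → V} {u₀ v₀ : V} {x y : V}
    (h : sameRel U g u₀ v₀ x y) : sameRel U g u₀ v₀ y x := by
  unfold sameRel at *
  by_cases hx : x ∈ U <;> by_cases hy : y ∈ U <;> simp_all <;> tauto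

lemma sameRel_trans {U : Finset V} {g : V → V} {u₀ v₀ : V} {x y z : V}
    (h1 : sameRel U g u₀ v₀ x y) (h2 : sameRel U g u₀ v₀ y z) :
    sameRel U g u₀ v₀ x z := by
  unfold sameRel at *
  by_cases hx : x ∈ U <;> by_cases hy : y ∈ U <;> by_cases hz : z ∈ U <;>
    simp_all

instance (U : Finset V) (g : V → V) (u₀ v₀ x y : V) :
    Decidable (sameRel U g u₀ v₀ x y) := by
  unfold sameRel; infer_instance

noncomputable def reprL (U : Finset V) (g : V → V) (u₀ v₀ : V) (x : V) : V :=
  letI : LinearOrder V := LinearOrder.lift' (Fintype.equivFin V) (Fintype.equivFin V).injective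
  (Finset.univ.filter (sameRel U g u₀ v₀ x)).min'
    ⟨x, by simp [sameRel_refl]⟩

lemma reprL_eq_iff (U : Finset V) (g : V → V) (u₀ v₀ : V) (x y : V) :
    reprL U g u₀ v₀ x = reprL U g u₀ v₀ y ↔ sameRel U g u₀ v₀ x y := by
  letI : LinearOrder V := LinearOrder.lift' (Fintype.equivFin V) (Fintype.equivFin V).injective
  constructor
  · intro h
    have hx : sameRel U g u₀ v₀ x (reprL U g u₀ v₀ x) := by
      have := Finset.min'_mem (Finset.univ.filter (sameRel U g u₀ v₀ x))
        ⟨x, by simp [sameRel_refl]⟩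
      simpa [reprL] using this
    have hy : sameRel U g u₀ v₀ y (reprL U g u₀ v₀ y) := by
      have := Finset.min'_mem (Finset.univ.filter (sameRel U g u₀ v₀ y))
        ⟨y, by simp [sameRel_refl]⟩
      simpa [reprL] using this
    rw [h] at hx
    exact sameRel_trans hx (sameRel_symm hy)
  · intro h
    have hset : Finset.univ.filter (sameRel U g u₀ v₀ x)
        = Finset.univ.filter (sameRel U g u₀ v₀ y) := by
      ext z
      simp only [Finset.mem_filter, Finset.mem_univ, true_and]
      exact ⟨fun hz => sameRel_trans (sameRel_symm h) hz,
             fun hz => sameRel_trans h hz⟩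
    unfold reprL
    congr 1

def cutP (p : V → V) : Sym2 V → Prop :=
  Sym2.lift ⟨fun x y => p x ≠ p y, fun a b => propext ne_comm⟩

@[simp] lemma cutP_mk (p : V → V) (x y : V) : cutP p s(x, y) ↔ p x ≠ p y := Iff.rfl

instance (p : V → V) : DecidablePred (cutP p) := fun e =>
  e.recOnSubsingleton fun x y => decidable_of_iff (p x ≠ p y) (cutP_mk p x y).symm

lemma multicut_eq_filter (G : SimpleGraph V) [DecidableRel G.Adj] (N : Finset (Sym2 V))
    (g : V → V) (hsub : N ⊆ G.edgeFinset)
    (hg : ∀ x y, G.Adj x y → (s(x, y) ∈ N ↔ g x ≠ g y)) :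
    N = G.edgeFinset.filter (cutP g) := by
  ext e
  induction e using Sym2.ind with
  | _ x y =>
    simp only [Finset.mem_filter, cutP_mk]
    constructor
    · intro hN
      have he := hsub hN
      have hadj : G.Adj x y := by
        rwa [SimpleGraph.mem_edgeFinset, SimpleGraph.mem_edgeSet] at he
      exact ⟨he, (hg x y hadj).mp hN⟩
    · rintro ⟨he, hne⟩
      have hadj : G.Adj x y := by
        rwa [SimpleGraph.mem_edgeFinset, SimpleGraph.mem_edgeSet] at he
      exact (hg x y hadj).mpr hne

/-- edge criterion for multicut, case `θ_f ≥ 0` (persistency `x*_f = 0`). -/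
theorem stmt_3 (G : SimpleGraph V) [DecidableRel G.Adj] (θ : Sym2 V → ℝ)
    (f : Sym2 V) (hf : f ∈ G.edgeFinset) (hθf : 0 ≤ θ f)
    (U : Finset V) (hUconn : (G.induce (U : Set V)).Connected)
    (hfδ : f ∈ cutδ G U)
    (hcrit : ∑ e ∈ (cutδ G U).erase f, |θ e| ≤ θ f) :
    ∃ M, IsMulticut G M ∧
      (∀ N, IsMulticut G N → ∑ e ∈ M, θ e ≤ ∑ e ∈ N, θ e) ∧ f ∉ M := by
  classical
  have hfδ' := hfδ
  rw [cutδ, _root_.btw, Finset.mem_filter] at hfδ'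
  obtain ⟨hfE, u₀, hu₀, v₀, hv₀c, hfeq⟩ := hfδ'
  have hv₀ : v₀ ∉ U := Finset.mem_compl.mp hv₀c
  have hadj : G.Adj u₀ v₀ := by
    rw [SimpleGraph.mem_edgeFinset, hfeq, SimpleGraph.mem_edgeSet] at hfE
    exact hfE
  set T : Finset (Finset (Sym2 V)) := G.edgeFinset.powerset.filter (IsMulticut G) with hT
  have hTne : T.Nonempty := by
    refine ⟨G.edgeFinset, ?_⟩
    rw [hT, Finset.mem_filter, Finset.mem_powerset]
    exact ⟨le_refl _, le_refl _, id, fun x y hxy => by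
      simp [SimpleGraph.mem_edgeFinset, hxy, hxy.ne]⟩
  obtain ⟨N, hNT, hNmin⟩ := Finset.exists_min_image T (fun N => ∑ e ∈ N, θ e) hTne
  rw [hT, Finset.mem_filter] at hNT
  obtain ⟨hNpow, hNsub, g, hg⟩ := hNT
  have hopt : ∀ N', IsMulticut G N' → ∑ e ∈ N, θ e ≤ ∑ e ∈ N', θ e := by
    intro N' hN'
    exact hNmin N' (by rw [hT, Finset.mem_filter, Finset.mem_powerset]; exact ⟨hN'.1, hN'⟩)
  by_cases hguv : g u₀ = g v₀
  · refine ⟨N, ⟨hNsub, g, hg⟩, hopt, ?_⟩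
    rw [hfeq]
    intro hmem
    exact ((hg u₀ v₀ hadj).mp hmem) hguv
  · set h : V → V := reprL U g u₀ v₀ with hh
    set M : Finset (Sym2 V) := G.edgeFinset.filter (cutP h) with hM
    have hMcut : IsMulticut G M := by
      refine ⟨Finset.filter_subset _ _, h, fun x y hxy => ?_⟩
      simp [hM, Finset.mem_filter, SimpleGraph.mem_edgeFinset, hxy]
    have hsame_uv : sameRel U g u₀ v₀ u₀ v₀ := by
      unfold sameRel; simp [hu₀, hv₀]
    have hfM : f ∉ M := by
      rw [hfeq, hM]
      simp only [Finset.mem_filter, cutP_mk]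
      rintro ⟨-, hne⟩
      exact hne ((reprL_eq_iff U g u₀ v₀ u₀ v₀).mpr hsame_uv)
    have hNeq : N = G.edgeFinset.filter (cutP g) := multicut_eq_filter G N g hNsub hg
    set F : Sym2 V → ℝ :=
      fun e => (if cutP h e then θ e else 0) - (if cutP g e then θ e else 0) with hF
    have hsum : ∑ e ∈ M, θ e - ∑ e ∈ N, θ e = ∑ e ∈ G.edgeFinset, F e := by
      rw [hM, hNeq, Finset.sum_filter, Finset.sum_filter, ← Finset.sum_sub_distrib]
    have hzero : ∀ e ∈ G.edgeFinset, e ∉ cutδ G U → F e = 0 := by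
      intro e heE heD
      induction e using Sym2.ind with
      | _ x y =>
        have hiff : (h x ≠ h y) ↔ (g x ≠ g y) := by
          by_cases hx : x ∈ U <;> by_cases hy : y ∈ U
          · rw [hh, ne_eq, ne_eq, reprL_eq_iff]; unfold sameRel; simp [hx, hy]
          · refine absurd ?_ heD
            rw [cutδ, _root_.btw, Finset.mem_filter]
            exact ⟨heE, x, hx, y, Finset.mem_compl.mpr hy, rfl⟩
          · refine absurd ?_ heD
            rw [cutδ, _root_.btw, Finset.mem_filter]
            exact ⟨heE, y, hy, x, Finset.mem_compl.mpr hx, Sym2.eq_swap⟩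
          · rw [hh, ne_eq, ne_eq, reprL_eq_iff]; unfold sameRel; simp [hx, hy]
        simp [hF, hiff]
    have hrestrict : ∑ e ∈ G.edgeFinset, F e = ∑ e ∈ cutδ G U, F e :=
      (Finset.sum_subset (Finset.filter_subset _ _) hzero).symm
    have hFf : F f = -θ f := by
      have hc1 : ¬ cutP h f := by
        rw [hfeq, cutP_mk]
        push_neg
        exact (reprL_eq_iff U g u₀ v₀ u₀ v₀).mpr hsame_uv
      have hc2 : cutP g f := by rw [hfeq]; exact hguv
      simp [hF, hc1, hc2]
    have hbound : ∀ e ∈ (cutδ G U).erase f, F e ≤ |θ e| := by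
      intro e _
      rw [hF]
      dsimp only
      split <;> split <;> simp [le_abs_self, neg_abs_le, abs_nonneg, neg_le_abs]
    have hsplit : F f + ∑ e ∈ (cutδ G U).erase f, F e = ∑ e ∈ cutδ G U, F e :=
      Finset.add_sum_erase _ F hfδ
    have hle : ∑ e ∈ (cutδ G U).erase f, F e ≤ ∑ e ∈ (cutδ G U).erase f, |θ e| :=
      Finset.sum_le_sum hbound
    have hfin : ∑ e ∈ M, θ e ≤ ∑ e ∈ N, θ e := by linarith
    exact ⟨M, hMcut, fun N' hN' => le_trans hfin (hopt N' hN'), hfM⟩
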